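/- Let φ = 2h/ε > 0 with sin(φ/2) ≥ 5/M for a positive integer M. Then the trigonometric sum satisfies ∑_{j=1}^{M} j² sin²(x_{N-2M+j-1/2}/ε) ≥ M³/12, where x_k = kh and x_{k-1/2} = (k - 1/2)h. -/

import Mathlib

open Real

private lemma g1 (z : ℂ) (M : ℕ) :
    (z - 1) * ∑ j ∈ Finset.Icc 1 M, z ^ j = z ^ (M + 1) - z := by
  induction M with
  | zero => simp
  | succ n ih =>
    rw [Finset.sum_Icc_succ_top (by omega : 1 ≤ n + 1), mul_add, ih]
    ring

private lemma g2 (z : ℂ) (M : ℕ) :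
    (z - 1) * ∑ j ∈ Finset.Icc 1 M, (j : ℂ) * z ^ j =
      (M : ℂ) * z ^ (M + 1) - ∑ j ∈ Finset.Icc 1 M, z ^ j := by
  induction M with
  | zero => simp
  | succ n ih =>
    rw [Finset.sum_Icc_succ_top (by omega : 1 ≤ n + 1),
      Finset.sum_Icc_succ_top (by omega : 1 ≤ n + 1), mul_add, ih]
    push_cast
    ring

private lemma g3 (z : ℂ) (M : ℕ) :
    (z - 1) * ∑ j ∈ Finset.Icc 1 M, (j : ℂ) ^ 2 * z ^ j =
      (M : ℂ) ^ 2 * z ^ (M + 1) - 2 * ∑ j ∈ Finset.Icc 1 M, (j : ℂ) * z ^ j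
        + ∑ j ∈ Finset.Icc 1 M, z ^ j := by
  induction M with
  | zero => simp
  | succ n ih =>
    rw [Finset.sum_Icc_succ_top (by omega : 1 ≤ n + 1),
      Finset.sum_Icc_succ_top (by omega : 1 ≤ n + 1) (fun j => (j : ℂ) * z ^ j),
      Finset.sum_Icc_succ_top (by omega : 1 ≤ n + 1) (fun j => z ^ j), mul_add, ih]
    push_cast
    ring

private lemma sq_sum_lb (M : ℕ) : (M : ℝ) ^ 3 / 3 ≤ ∑ j ∈ Finset.Icc 1 M, (j : ℝ) ^ 2 := by
  induction M with
  | zero => simp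
  | succ n ih =>
    rw [Finset.sum_Icc_succ_top (by omega : 1 ≤ n + 1)]
    have hn : (0:ℝ) ≤ n := n.cast_nonneg
    push_cast
    nlinarith [ih, hn]

private lemma num_bound (m s a b c : ℝ) (hm : 5 ≤ m) (hs0 : 0 < s)
    (h5 : 5 ≤ s * m) (ha0 : 0 ≤ a) (hb0 : 0 ≤ b) (hc0 : 0 ≤ c)
    (hA : 2 * s * a ≤ 2) (hB : 2 * s * b ≤ m + a) (hC : 2 * s * c ≤ m ^ 2 + 2 * b + a) :
    c ≤ m ^ 3 / 6 := by
  have hm0 : (0:ℝ) < m := by linarith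
  have ha' : a ≤ m / 5 := by
    nlinarith [mul_nonneg ha0 (sub_nonneg.mpr h5), mul_nonneg hm0.le (sub_nonneg.mpr hA)]
  have hb' : b ≤ 3 * m ^ 2 / 25 := by
    nlinarith [mul_nonneg hb0 (sub_nonneg.mpr h5), mul_nonneg hm0.le (sub_nonneg.mpr hB)]
  nlinarith [mul_nonneg hc0 (sub_nonneg.mpr h5), mul_nonneg hm0.le (sub_nonneg.mpr hC),
    mul_nonneg hm0.le hm0.le]

theorem stmt_11 (h ε : ℝ) (N M : ℕ) (hh : 0 < h) (hε : 0 < ε) (hM : 0 < M)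
    (hsmall : h / ε ≤ π / 2)
    (hsin : Real.sin ((2 * h / ε) / 2) ≥ 5 / M) :
    ∑ j ∈ Finset.Icc 1 M,
        (j : ℝ) ^ 2 * Real.sin ((((N : ℝ) - 2 * M + j - 1 / 2) * h) / ε) ^ 2
      ≥ (M : ℝ) ^ 3 / 12 := by
  set θ : ℝ := h / ε with hθdef
  have hθ : 0 < θ := div_pos hh hε
  have heq : (2 * h / ε) / 2 = θ := by rw [hθdef]; ring
  rw [heq] at hsin
  set s : ℝ := Real.sin θ with hsdef
  have hMpos : (0 : ℝ) < M := by exact_mod_cast hM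
  have hs : 5 / (M : ℝ) ≤ s := hsin
  have hs0 : 0 < s := lt_of_lt_of_le (by positivity) hs
  have hs1 : s ≤ 1 := Real.sin_le_one θ
  have h5 : (5 : ℝ) ≤ s * M := by
    have := (div_le_iff₀ hMpos).mp hs
    linarith
  have hM5 : (5 : ℝ) ≤ M := by nlinarith
  -- complex setup
  set z : ℂ := Complex.exp ((2 * θ : ℝ) * Complex.I) with hzdef
  have habsz : ‖z‖ = 1 := Complex.norm_exp_ofReal_mul_I _
  have habszp : ∀ n : ℕ, ‖z ^ n‖ = 1 := by
    intro n; rw [norm_pow, habsz, one_pow]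
  have hz1 : ‖z - 1‖ = 2 * s := by
    have hre : z = (Real.cos (2 * θ) : ℂ) + (Real.sin (2 * θ) : ℂ) * Complex.I := by
      rw [hzdef, Complex.exp_mul_I, ← Complex.ofReal_cos, ← Complex.ofReal_sin]
    have hrei : (z - 1).re = Real.cos (2 * θ) - 1 ∧ (z - 1).im = Real.sin (2 * θ) := by
      rw [hre]; constructor <;> simp [-Complex.ofReal_cos, -Complex.ofReal_sin]
    have h2 : ‖z - 1‖ ^ 2 = (Real.cos (2 * θ) - 1) ^ 2 + Real.sin (2 * θ) ^ 2 := by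
      rw [Complex.sq_norm, Complex.normSq_apply, hrei.1, hrei.2]
      ring
    have hcos2 : Real.cos (2 * θ) = 1 - 2 * s ^ 2 := by
      rw [Real.cos_two_mul, hsdef]
      linarith [Real.sin_sq_add_cos_sq θ]
    have hsin2 : Real.sin (2 * θ) ^ 2 = (2 * s * Real.cos θ) ^ 2 := by
      rw [Real.sin_two_mul, hsdef]
    have h3 : ‖z - 1‖ ^ 2 = (2 * s) ^ 2 := by
      rw [h2, hcos2, hsin2]
      have := Real.sin_sq_add_cos_sq θ
      nlinarith [this]
    calc ‖z - 1‖ = Real.sqrt (‖z - 1‖ ^ 2) :=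
          (Real.sqrt_sq (norm_nonneg _)).symm
      _ = Real.sqrt ((2 * s) ^ 2) := by rw [h3]
      _ = 2 * s := Real.sqrt_sq (by positivity)
  set A : ℂ := ∑ j ∈ Finset.Icc 1 M, z ^ j with hAdef
  set B : ℂ := ∑ j ∈ Finset.Icc 1 M, (j : ℂ) * z ^ j with hBdef
  set C : ℂ := ∑ j ∈ Finset.Icc 1 M, (j : ℂ) ^ 2 * z ^ j with hCdef
  set a : ℝ := ‖A‖ with hadef
  set b : ℝ := ‖B‖ with hbdef
  set c : ℝ := ‖C‖ with hcdef
  have ha0 : 0 ≤ a := norm_nonneg _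
  have hb0 : 0 ≤ b := norm_nonneg _
  have hc0 : 0 ≤ c := norm_nonneg _
  have hA : 2 * s * a ≤ 2 := by
    have := g1 z M
    have h4 : ‖(z - 1) * A‖ ≤ 2 := by
      rw [this]
      calc ‖z ^ (M + 1) - z‖ ≤ ‖z ^ (M + 1)‖ + ‖z‖ :=
            norm_sub_le _ _
        _ ≤ 2 := by rw [habszp, habsz]; norm_num
    rwa [norm_mul, hz1] at h4
  have hB : 2 * s * b ≤ M + a := by
    have := g2 z M
    have h4 : ‖(z - 1) * B‖ ≤ M + a := by
      rw [this]
      calc ‖(M : ℂ) * z ^ (M + 1) - A‖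
          ≤ ‖(M : ℂ) * z ^ (M + 1)‖ + ‖A‖ := norm_sub_le _ _
        _ = M + a := by rw [norm_mul, habszp, Complex.norm_natCast]; ring
    rwa [norm_mul, hz1] at h4
  have hC : 2 * s * c ≤ M ^ 2 + 2 * b + a := by
    have := g3 z M
    have h4 : ‖(z - 1) * C‖ ≤ M ^ 2 + 2 * b + a := by
      rw [this]
      calc ‖(M : ℂ) ^ 2 * z ^ (M + 1) - 2 * B + A‖
          ≤ ‖(M : ℂ) ^ 2 * z ^ (M + 1) - 2 * B‖ + ‖A‖ :=
            norm_add_le _ _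
        _ ≤ ‖(M : ℂ) ^ 2 * z ^ (M + 1)‖ + ‖2 * B‖ + ‖A‖ := by
            have := norm_sub_le ((M : ℂ) ^ 2 * z ^ (M + 1)) (2 * B)
            linarith
        _ = M ^ 2 + 2 * b + a := by
            rw [norm_mul, habszp, norm_mul, norm_pow, Complex.norm_natCast]
            simp [hbdef, hadef]
    rwa [norm_mul, hz1] at h4
  -- numeric bounds
  have hc' : c ≤ (M : ℝ) ^ 3 / 6 :=
    num_bound (M : ℝ) s a b c hM5 hs0 h5 ha0 hb0 hc0 hA hB hC
  -- rewrite summand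
  set bb : ℝ := (2 * (N : ℝ) - 4 * M - 1) * θ with hbbdef
  have hsummand : ∀ j ∈ Finset.Icc 1 M,
      (j : ℝ) ^ 2 * Real.sin ((((N : ℝ) - 2 * M + j - 1 / 2) * h) / ε) ^ 2 =
        (j : ℝ) ^ 2 / 2 - (j : ℝ) ^ 2 * Real.cos (bb + j * (2 * θ)) / 2 := by
    intro j _
    have hang : 2 * ((((N : ℝ) - 2 * M + j - 1 / 2) * h) / ε) = bb + j * (2 * θ) := by
      rw [hbbdef, hθdef]
      field_simp
      ring
    rw [Real.sin_sq_eq_half_sub, hang]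
    ring
  rw [Finset.sum_congr rfl hsummand]
  have hsplit : ∑ j ∈ Finset.Icc 1 M,
      ((j : ℝ) ^ 2 / 2 - (j : ℝ) ^ 2 * Real.cos (bb + j * (2 * θ)) / 2) =
      (∑ j ∈ Finset.Icc 1 M, (j : ℝ) ^ 2) / 2 -
        (∑ j ∈ Finset.Icc 1 M, (j : ℝ) ^ 2 * Real.cos (bb + j * (2 * θ))) / 2 := by
    rw [Finset.sum_sub_distrib, Finset.sum_div, Finset.sum_div]
  rw [hsplit]
  -- bound the oscillatory sum
  set R : ℝ := ∑ j ∈ Finset.Icc 1 M, (j : ℝ) ^ 2 * Real.cos (bb + j * (2 * θ)) with hRdef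
  have hRC : R = (Complex.exp ((bb : ℝ) * Complex.I) * C).re := by
    rw [hRdef, hCdef, Finset.mul_sum, Complex.re_sum]
    apply Finset.sum_congr rfl
    intro j _
    have hzj : Complex.exp ((bb : ℝ) * Complex.I) * z ^ j =
        Complex.exp (((bb + j * (2 * θ) : ℝ)) * Complex.I) := by
      rw [hzdef, ← Complex.exp_nat_mul, ← Complex.exp_add]
      congr 1
      push_cast
      ring
    have hcast : ((j : ℂ) ^ 2) = ((((j : ℝ) ^ 2 : ℝ)) : ℂ) := by push_cast; ring
    have hmul : Complex.exp ((bb : ℝ) * Complex.I) * (((((j : ℝ) ^ 2 : ℝ)) : ℂ) * z ^ j) =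
        ((((j : ℝ) ^ 2 : ℝ)) : ℂ) * (Complex.exp ((bb : ℝ) * Complex.I) * z ^ j) := by ring
    rw [hcast, hmul, hzj, Complex.re_ofReal_mul, Complex.exp_ofReal_mul_I_re]
  have hRabs : |R| ≤ c := by
    rw [hRC]
    calc |(Complex.exp ((bb : ℝ) * Complex.I) * C).re|
        ≤ ‖Complex.exp ((bb : ℝ) * Complex.I) * C‖ := Complex.abs_re_le_norm _
      _ = c := by rw [norm_mul, Complex.norm_exp_ofReal_mul_I, one_mul, hcdef]
  have hT := sq_sum_lb M
  have hRle : R ≤ (M : ℝ) ^ 3 / 6 := le_trans (le_abs_self R) (le_trans hRabs hc')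
  linarith
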